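/- The linear endomorphisms τ_B, τ_C, τ_D of Â_S determined by τ_B(c) = τ_C(c) = τ_D(c) = c and τ_B(A_{α,m}) = −(−1)^m A_{−α,m}, τ_C(A_{α,m}) = −(−1)^m χ(2α) A_{−α,m}, τ_D(A_{α,m}) = −χ(2α) A_{−α,m} (for α ∈ S, m ∈ ℤ) are Lie algebra automorphisms of Â_S, and each composed with itself is the identity (they have order 2). -/

import Mathlib

open scoped Classical

/-- The underlying vector space `ℂ ⊕ ((S × ℤ) →₀ ℂ)` of the trigonometric Lie algebra `Â_S`. -/
abbrev TrigA (S : Type*) := ℂ × ((S × ℤ) →₀ ℂ)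

/-- The central basis element `c`. -/
noncomputable def Acen (S : Type*) : TrigA S := (1, 0)

/-- The basis element `A_{α,m}`. -/
noncomputable def Agen {S : Type*} (α : S) (m : ℤ) : TrigA S := (0, Finsupp.single (α, m) 1)

/-- The value of the bracket on basis elements. -/
noncomputable def AbrkBasis {S : Type*} [AddCommGroup S] (χ : S → ℂˣ) (p q : S × ℤ) :
    TrigA S :=
  ((if p.1 + q.1 = 0 ∧ p.2 + q.2 = 0 then (p.2 : ℂ) else 0),
    Finsupp.single (p.1 + q.1, p.2 + q.2)
      (((χ (p.2 • q.1 - q.2 • p.1) : ℂˣ) : ℂ) - ((χ (q.2 • p.1 - p.2 • q.1) : ℂˣ) : ℂ)))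

/-- The Lie bracket of `Â_S`. -/
noncomputable def Abrk {S : Type*} [AddCommGroup S] (χ : S → ℂˣ) (x y : TrigA S) : TrigA S :=
  x.2.sum fun p a => y.2.sum fun q b => (a * b) • AbrkBasis χ p q

/-- The linear endomorphism of `Â_S` fixing `c` and sending `A_{α,m} ↦ cf(α,m) • A_{σ(α,m)}`. -/
noncomputable def twistA {S : Type*} (cf : S × ℤ → ℂ) (σ : S × ℤ → S × ℤ) :
    TrigA S →ₗ[ℂ] TrigA S :=
  LinearMap.prodMap LinearMap.id
    (Finsupp.lsum ℂ fun p => cf p • Finsupp.lsingle (σ p))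

/-- `τ_B(c) = c`, `τ_B(A_{α,m}) = −(−1)^m A_{−α,m}`. -/
noncomputable def tauB (S : Type*) [AddCommGroup S] : TrigA S →ₗ[ℂ] TrigA S :=
  twistA (fun p => -(-1 : ℂ) ^ p.2) (fun p => (-p.1, p.2))

/-- `τ_C(c) = c`, `τ_C(A_{α,m}) = −(−1)^m χ(2α) A_{−α,m}`. -/
noncomputable def tauC {S : Type*} [AddCommGroup S] (χ : S → ℂˣ) : TrigA S →ₗ[ℂ] TrigA S :=
  twistA (fun p => -(-1 : ℂ) ^ p.2 * ((χ (p.1 + p.1) : ℂˣ) : ℂ)) (fun p => (-p.1, p.2))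

/-- `τ_D(c) = c`, `τ_D(A_{α,m}) = −χ(2α) A_{−α,m}`. -/
noncomputable def tauD {S : Type*} [AddCommGroup S] (χ : S → ℂˣ) : TrigA S →ₗ[ℂ] TrigA S :=
  twistA (fun p => -((χ (p.1 + p.1) : ℂˣ) : ℂ)) (fun p => (-p.1, p.2))

lemma twistA_apply {S : Type*} (cf : S × ℤ → ℂ) (σ : S × ℤ → S × ℤ) (x : TrigA S) :
    twistA cf σ x = (x.1, x.2.sum fun p a => Finsupp.single (σ p) (cf p * a)) := by
  simp [twistA, Finsupp.lsum_apply, Finsupp.sum, Finsupp.smul_single']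

lemma twist_AbrkBasis {S : Type*} [AddCommGroup S] (χ : S → ℂˣ) (cf : S × ℤ → ℂ)
    (Hmul : ∀ p q : S × ℤ, cf (p.1 + q.1, p.2 + q.2) = -(cf p * cf q))
    (H0 : cf (0, 0) = -1) (p q : S × ℤ) :
    twistA cf (fun r => (-r.1, r.2)) (AbrkBasis χ p q)
      = (cf p * cf q) • AbrkBasis χ (-p.1, p.2) (-q.1, q.2) := by
  rw [twistA_apply]
  unfold AbrkBasis
  refine Prod.ext ?_ ?_
  · show (if p.1 + q.1 = 0 ∧ p.2 + q.2 = 0 then (p.2 : ℂ) else 0)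
      = cf p * cf q * (if -p.1 + -q.1 = 0 ∧ p.2 + q.2 = 0 then (p.2 : ℂ) else 0)
    have hiff : (-p.1 + -q.1 = 0 ∧ p.2 + q.2 = 0) ↔ (p.1 + q.1 = 0 ∧ p.2 + q.2 = 0) := by
      rw [← neg_add, neg_eq_zero]
    rw [if_congr hiff rfl rfl]
    split_ifs with h
    · have h1 : cf p * cf q = 1 := by
        have := Hmul p q
        rw [h.1, h.2] at this
        rw [H0] at this
        linear_combination this
      rw [h1, one_mul]
    · ring
  · show ((Finsupp.single (p.1 + q.1, p.2 + q.2)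
        ((((χ (p.2 • q.1 - q.2 • p.1) : ℂˣ) : ℂ)) - ((χ (q.2 • p.1 - p.2 • q.1) : ℂˣ) : ℂ))).sum
      fun r a => Finsupp.single (-r.1, r.2) (cf r * a)) = _
    rw [Finsupp.sum_single_index (by simp)]
    show Finsupp.single (-(p.1 + q.1), p.2 + q.2) _
      = (cf p * cf q) • Finsupp.single (-p.1 + -q.1, p.2 + q.2)
        (((χ (p.2 • -q.1 - q.2 • -p.1) : ℂˣ) : ℂ) - ((χ (q.2 • -p.1 - p.2 • -q.1) : ℂˣ) : ℂ))
    have harg1 : p.2 • -q.1 - q.2 • -p.1 = q.2 • p.1 - p.2 • q.1 := by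
      rw [smul_neg, smul_neg, sub_neg_eq_add, neg_add_eq_sub]
    have harg2 : q.2 • -p.1 - p.2 • -q.1 = p.2 • q.1 - q.2 • p.1 := by
      rw [smul_neg, smul_neg, sub_neg_eq_add, neg_add_eq_sub]
    rw [harg1, harg2, Finsupp.smul_single', neg_add, Hmul p q]
    congr 1
    ring

lemma twist_Abrk {S : Type*} [AddCommGroup S] (χ : S → ℂˣ) (cf : S × ℤ → ℂ)
    (Hmul : ∀ p q : S × ℤ, cf (p.1 + q.1, p.2 + q.2) = -(cf p * cf q))
    (H0 : cf (0, 0) = -1) (x y : TrigA S) :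
    twistA cf (fun r => (-r.1, r.2)) (Abrk χ x y)
      = Abrk χ (twistA cf (fun r => (-r.1, r.2)) x) (twistA cf (fun r => (-r.1, r.2)) y) := by
  set T := twistA cf (fun r : S × ℤ => (-r.1, r.2)) with hT
  have hx2 : (T x).2 = x.2.sum fun p a => Finsupp.single (-p.1, p.2) (cf p * a) := by
    rw [hT, twistA_apply]
  have hy2 : (T y).2 = y.2.sum fun p a => Finsupp.single (-p.1, p.2) (cf p * a) := by
    rw [hT, twistA_apply]
  show T (x.2.sum fun p a => y.2.sum fun q b => (a * b) • AbrkBasis χ p q) = Abrk χ (T x) (T y)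
  rw [map_finsuppSum]
  unfold Abrk
  rw [hx2, Finsupp.sum_sum_index (fun _ => by simp [Finsupp.sum])
    (fun p b₁ b₂ => by
      rw [← Finsupp.sum_add]; exact Finsupp.sum_congr fun q _ => by rw [add_mul]; module)]
  refine Finsupp.sum_congr fun p _ => ?_
  rw [map_finsuppSum, Finsupp.sum_single_index (by simp [Finsupp.sum]),
    hy2, Finsupp.sum_sum_index (fun _ => by simp)
    (fun q b₁ b₂ => by rw [mul_add]; module)]
  refine Finsupp.sum_congr fun q hq => ?_
  rw [Finsupp.sum_single_index (by simp)]
  rw [map_smul, twist_AbrkBasis χ cf Hmul H0 p q, smul_smul]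
  ring_nf

lemma twist_invol {S : Type*} [AddCommGroup S] (cf : S × ℤ → ℂ)
    (Hinv : ∀ p : S × ℤ, cf (-p.1, p.2) * cf p = 1) :
    (twistA cf (fun r => (-r.1, r.2))).comp (twistA (S := S) cf (fun r => (-r.1, r.2)))
      = LinearMap.id := by
  refine LinearMap.ext fun x => ?_
  rw [LinearMap.comp_apply, twistA_apply, twistA_apply, LinearMap.id_apply]
  refine Prod.ext rfl ?_
  show ((x.2.sum fun p a => Finsupp.single (-p.1, p.2) (cf p * a)).sum
    fun p a => Finsupp.single (-p.1, p.2) (cf p * a)) = x.2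
  rw [Finsupp.sum_sum_index (fun _ => by simp)
    (fun p b₁ b₂ => by rw [mul_add, Finsupp.single_add])]
  conv_rhs => rw [← Finsupp.sum_single x.2]
  refine Finsupp.sum_congr fun p _ => ?_
  rw [Finsupp.sum_single_index (by simp)]
  show Finsupp.single (- -p.1, p.2) (cf (-p.1, p.2) * (cf p * x.2 p)) = _
  rw [neg_neg, ← mul_assoc, Hinv, one_mul]

lemma invol_bijective {S : Type*} [AddCommGroup S] (T : TrigA S →ₗ[ℂ] TrigA S)
    (h : T.comp T = LinearMap.id) : Function.Bijective T := by
  have h' : ∀ x, T (T x) = x := fun x => congrArg (fun f => f x) (congrArg DFunLike.coe h)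
  exact ⟨fun a b hab => by rw [← h' a, hab, h' b], fun y => ⟨T y, h' y⟩⟩

lemma twistA_Acen {S : Type*} (cf : S × ℤ → ℂ) (σ : S × ℤ → S × ℤ) :
    twistA cf σ (Acen S) = Acen S := by
  rw [twistA_apply]; unfold Acen; simp

lemma twistA_Agen {S : Type*} [AddCommGroup S] (cf : S × ℤ → ℂ) (α : S) (m : ℤ) :
    twistA cf (fun r => (-r.1, r.2)) (Agen α m) = cf (α, m) • Agen (-α) m := by
  rw [twistA_apply]
  unfold Agen
  refine Prod.ext (by simp) ?_
  rw [Finsupp.sum_single_index (by simp)]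
  show Finsupp.single (-α, m) (cf (α, m) * 1) = _
  simp [Finsupp.smul_single']

lemma neg_one_zpow_sq (m : ℤ) : (-1 : ℂ) ^ m * (-1 : ℂ) ^ m = 1 := by
  rw [← zpow_add₀ (by norm_num : (-1 : ℂ) ≠ 0), ← two_mul, zpow_mul]
  norm_num


theorem stmt1 {S : Type*} [AddCommGroup S] (χ : S → ℂˣ)
    (hχ : ∀ a b : S, χ (a + b) = χ a * χ b) :
    -- the three maps take the prescribed values on `c` and on the basis elements
    (tauB S (Acen S) = Acen S ∧ tauC χ (Acen S) = Acen S ∧ tauD χ (Acen S) = Acen S) ∧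
    (∀ (α : S) (m : ℤ),
      tauB S (Agen α m) = (-(-1 : ℂ) ^ m) • Agen (-α) m ∧
      tauC χ (Agen α m) = (-(-1 : ℂ) ^ m * ((χ (α + α) : ℂˣ) : ℂ)) • Agen (-α) m ∧
      tauD χ (Agen α m) = (-((χ (α + α) : ℂˣ) : ℂ)) • Agen (-α) m) ∧
    -- they are Lie algebra automorphisms: bijective and bracket preserving
    (Function.Bijective (tauB S) ∧ Function.Bijective (tauC χ) ∧
      Function.Bijective (tauD χ)) ∧
    (∀ x y : TrigA S, tauB S (Abrk χ x y) = Abrk χ (tauB S x) (tauB S y)) ∧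
    (∀ x y : TrigA S, tauC χ (Abrk χ x y) = Abrk χ (tauC χ x) (tauC χ y)) ∧
    (∀ x y : TrigA S, tauD χ (Abrk χ x y) = Abrk χ (tauD χ x) (tauD χ y)) ∧
    -- and each composed with itself is the identity (order 2)
    ((tauB S).comp (tauB S) = LinearMap.id ∧ (tauC χ).comp (tauC χ) = LinearMap.id ∧
      (tauD χ).comp (tauD χ) = LinearMap.id) := by
  have hχ' : ∀ a b : S, ((χ (a + b) : ℂˣ) : ℂ) = ((χ a : ℂˣ) : ℂ) * ((χ b : ℂˣ) : ℂ) :=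
    fun a b => by exact_mod_cast congrArg Units.val (hχ a b)
  have χ0u : χ 0 = 1 := by
    have h := hχ 0 0
    rw [add_zero] at h
    exact left_eq_mul.mp h
  have χ0 : ((χ 0 : ℂˣ) : ℂ) = 1 := by rw [χ0u]; rfl
  -- B
  have HmulB : ∀ p q : S × ℤ, (fun p : S × ℤ => -(-1 : ℂ) ^ p.2) (p.1 + q.1, p.2 + q.2)
      = -((fun p : S × ℤ => -(-1 : ℂ) ^ p.2) p * (fun p : S × ℤ => -(-1 : ℂ) ^ p.2) q) := by
    intro p q
    show -(-1 : ℂ) ^ (p.2 + q.2) = -(-(-1 : ℂ) ^ p.2 * -(-1 : ℂ) ^ q.2)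
    rw [zpow_add₀ (by norm_num : (-1 : ℂ) ≠ 0)]; ring
  have H0B : (fun p : S × ℤ => -(-1 : ℂ) ^ p.2) ((0 : S), (0 : ℤ)) = -1 := by norm_num
  have HinvB : ∀ p : S × ℤ, (fun p : S × ℤ => -(-1 : ℂ) ^ p.2) (-p.1, p.2)
      * (fun p : S × ℤ => -(-1 : ℂ) ^ p.2) p = 1 := by
    intro p
    show -(-1 : ℂ) ^ p.2 * -(-1 : ℂ) ^ p.2 = 1
    rw [neg_mul_neg, neg_one_zpow_sq]
  -- C
  have HmulC : ∀ p q : S × ℤ,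
      (fun p : S × ℤ => -(-1 : ℂ) ^ p.2 * ((χ (p.1 + p.1) : ℂˣ) : ℂ)) (p.1 + q.1, p.2 + q.2)
      = -((fun p : S × ℤ => -(-1 : ℂ) ^ p.2 * ((χ (p.1 + p.1) : ℂˣ) : ℂ)) p
        * (fun p : S × ℤ => -(-1 : ℂ) ^ p.2 * ((χ (p.1 + p.1) : ℂˣ) : ℂ)) q) := by
    intro p q
    show -(-1 : ℂ) ^ (p.2 + q.2) * ((χ (p.1 + q.1 + (p.1 + q.1)) : ℂˣ) : ℂ) = _
    have harg : p.1 + q.1 + (p.1 + q.1) = (p.1 + p.1) + (q.1 + q.1) := by abel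
    rw [harg, hχ', zpow_add₀ (by norm_num : (-1 : ℂ) ≠ 0)]; ring
  have H0C : (fun p : S × ℤ => -(-1 : ℂ) ^ p.2 * ((χ (p.1 + p.1) : ℂˣ) : ℂ))
      ((0 : S), (0 : ℤ)) = -1 := by
    show -(-1 : ℂ) ^ (0 : ℤ) * ((χ ((0 : S) + 0) : ℂˣ) : ℂ) = -1
    rw [add_zero, χ0]; norm_num
  have HinvC : ∀ p : S × ℤ,
      (fun p : S × ℤ => -(-1 : ℂ) ^ p.2 * ((χ (p.1 + p.1) : ℂˣ) : ℂ)) (-p.1, p.2)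
      * (fun p : S × ℤ => -(-1 : ℂ) ^ p.2 * ((χ (p.1 + p.1) : ℂˣ) : ℂ)) p = 1 := by
    intro p
    show -(-1 : ℂ) ^ p.2 * ((χ (-p.1 + -p.1) : ℂˣ) : ℂ)
      * (-(-1 : ℂ) ^ p.2 * ((χ (p.1 + p.1) : ℂˣ) : ℂ)) = 1
    have : ((χ (-p.1 + -p.1) : ℂˣ) : ℂ) * ((χ (p.1 + p.1) : ℂˣ) : ℂ) = 1 := by
      rw [← hχ']
      have harg : -p.1 + -p.1 + (p.1 + p.1) = 0 := by abel
      rw [harg, χ0]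
    calc -(-1 : ℂ) ^ p.2 * ((χ (-p.1 + -p.1) : ℂˣ) : ℂ)
          * (-(-1 : ℂ) ^ p.2 * ((χ (p.1 + p.1) : ℂˣ) : ℂ))
        = ((-1 : ℂ) ^ p.2 * (-1 : ℂ) ^ p.2)
          * (((χ (-p.1 + -p.1) : ℂˣ) : ℂ) * ((χ (p.1 + p.1) : ℂˣ) : ℂ)) := by ring
      _ = 1 := by rw [neg_one_zpow_sq, this, one_mul]
  -- D
  have HmulD : ∀ p q : S × ℤ,
      (fun p : S × ℤ => -((χ (p.1 + p.1) : ℂˣ) : ℂ)) (p.1 + q.1, p.2 + q.2)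
      = -((fun p : S × ℤ => -((χ (p.1 + p.1) : ℂˣ) : ℂ)) p
        * (fun p : S × ℤ => -((χ (p.1 + p.1) : ℂˣ) : ℂ)) q) := by
    intro p q
    show -((χ (p.1 + q.1 + (p.1 + q.1)) : ℂˣ) : ℂ) = _
    have harg : p.1 + q.1 + (p.1 + q.1) = (p.1 + p.1) + (q.1 + q.1) := by abel
    rw [harg, hχ']; ring
  have H0D : (fun p : S × ℤ => -((χ (p.1 + p.1) : ℂˣ) : ℂ)) ((0 : S), (0 : ℤ)) = -1 := by
    show -((χ ((0 : S) + 0) : ℂˣ) : ℂ) = -1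
    rw [add_zero, χ0]
  have HinvD : ∀ p : S × ℤ,
      (fun p : S × ℤ => -((χ (p.1 + p.1) : ℂˣ) : ℂ)) (-p.1, p.2)
      * (fun p : S × ℤ => -((χ (p.1 + p.1) : ℂˣ) : ℂ)) p = 1 := by
    intro p
    show -((χ (-p.1 + -p.1) : ℂˣ) : ℂ) * -((χ (p.1 + p.1) : ℂˣ) : ℂ) = 1
    rw [neg_mul_neg, ← hχ']
    have harg : -p.1 + -p.1 + (p.1 + p.1) = 0 := by abel
    rw [harg, χ0]
  have hB2 := twist_invol (fun p : S × ℤ => -(-1 : ℂ) ^ p.2) HinvB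
  have hC2 := twist_invol (fun p : S × ℤ => -(-1 : ℂ) ^ p.2 * ((χ (p.1 + p.1) : ℂˣ) : ℂ)) HinvC
  have hD2 := twist_invol (fun p : S × ℤ => -((χ (p.1 + p.1) : ℂˣ) : ℂ)) HinvD
  refine ⟨⟨twistA_Acen _ _, twistA_Acen _ _, twistA_Acen _ _⟩,
    fun α m => ⟨twistA_Agen (fun p : S × ℤ => -(-1 : ℂ) ^ p.2) α m, twistA_Agen (fun p : S × ℤ => -(-1 : ℂ) ^ p.2 * ((χ (p.1 + p.1) : ℂˣ) : ℂ)) α m, twistA_Agen (fun p : S × ℤ => -((χ (p.1 + p.1) : ℂˣ) : ℂ)) α m⟩,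
    ⟨invol_bijective _ hB2, invol_bijective _ hC2, invol_bijective _ hD2⟩,
    fun x y => twist_Abrk χ (fun p : S × ℤ => -(-1 : ℂ) ^ p.2) HmulB H0B x y,
    fun x y => twist_Abrk χ (fun p : S × ℤ => -(-1 : ℂ) ^ p.2 * ((χ (p.1 + p.1) : ℂˣ) : ℂ)) HmulC H0C x y,
    fun x y => twist_Abrk χ (fun p : S × ℤ => -((χ (p.1 + p.1) : ℂˣ) : ℂ)) HmulD H0D x y,
    hB2, hC2, hD2⟩
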